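/- Let d > 0 be a real number and let n : ℝ → ℝ be continuous and integrable. Set v := p_d ∗ n. Then v is differentiable and for every x ∈ ℝ the two representations hold: v'(x) = −(1/√d)·v(x) + (1/d)·e^{x/√d} ∫_x^{+∞} e^{−ξ/√d} n(ξ) dξ, and v'(x) = (1/√d)·v(x) − (1/d)·e^{−x/√d} ∫_{−∞}^x e^{ξ/√d} n(ξ) dξ. -/

import Mathlib

open MeasureTheory Set Real

/-- FTC for lower-tail integrals. -/
lemma hasDerivAt_int_Iio (f : ℝ → ℝ) (hf : Continuous f)
    (hfi : ∀ a : ℝ, IntegrableOn f (Set.Iic a)) (x : ℝ) :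
    HasDerivAt (fun u => ∫ t in Set.Iio u, f t) (f x) x := by
  have key : ∀ u : ℝ, ∫ t in Set.Iio u, f t
      = (∫ t in Set.Iic (0:ℝ), f t) + ∫ t in (0:ℝ)..u, f t := by
    intro u
    rw [← integral_Iic_eq_integral_Iio,
      ← intervalIntegral.integral_Iic_sub_Iic (hfi 0) (hfi u)]
    ring
  have h2 : HasDerivAt (fun u => ∫ t in (0:ℝ)..u, f t) (f x) x :=
    intervalIntegral.integral_hasDerivAt_right (hf.intervalIntegrable 0 x)
      (hf.stronglyMeasurableAtFilter _ _) hf.continuousAt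
  have := (h2.const_add (∫ t in Set.Iic (0:ℝ), f t))
  simpa [← key] using this

/-- FTC for upper-tail integrals. -/
lemma hasDerivAt_int_Ioi (f : ℝ → ℝ) (hf : Continuous f)
    (hfi : ∀ a : ℝ, IntegrableOn f (Set.Ici a)) (x : ℝ) :
    HasDerivAt (fun u => ∫ t in Set.Ioi u, f t) (-(f x)) x := by
  set g : ℝ → ℝ := fun t => f (-t) with hg
  have hgc : Continuous g := hf.comp continuous_neg
  have hgi : ∀ a : ℝ, IntegrableOn g (Set.Iic a) := by
    intro a
    have := (MeasurePreserving.integrableOn_comp_preimage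
      (Measure.measurePreserving_neg (volume : Measure ℝ))
      (Homeomorph.neg ℝ).isClosedEmbedding.measurableEmbedding
      (f := f) (s := Set.Ici (-a))).2 (hfi (-a))
    simpa [g, Function.comp_def, Set.preimage, Set.Iic] using this
  have h1 : HasDerivAt (fun w => ∫ t in Set.Iio w, g t) (g (-x)) (-x) :=
    hasDerivAt_int_Iio g hgc hgi (-x)
  have h2 : HasDerivAt (fun u => ∫ t in Set.Iio (-u), g t) (g (-x) * (-1)) x :=
    h1.comp x (hasDerivAt_neg x)
  have heq : (fun u => ∫ t in Set.Iio (-u), g t) = fun u => ∫ t in Set.Ioi u, f t := by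
    funext u
    rw [← integral_Iic_eq_integral_Iio, hg]
    rw [integral_comp_neg_Iic]
    simp
  rw [heq] at h2
  simpa [g] using h2

/-- The kernel `p_d(x) = (1/(2√d)) exp(-|x|/√d)`. -/
noncomputable def pd (d : ℝ) (x : ℝ) : ℝ :=
  1 / (2 * Real.sqrt d) * Real.exp (-|x| / Real.sqrt d)

theorem deriv_convolution_one_sided (d : ℝ) (hd : 0 < d) (n : ℝ → ℝ)
    (hc : Continuous n) (hi : MeasureTheory.Integrable n)
    (v : ℝ → ℝ) (hv : v = fun x => ∫ ξ : ℝ, pd d (x - ξ) * n ξ) :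
    Differentiable ℝ v ∧
    ∀ x : ℝ,
      deriv v x
        = -(1 / Real.sqrt d) * v x
          + (1 / d) * Real.exp (x / Real.sqrt d)
            * ∫ ξ in Set.Ioi x, Real.exp (-ξ / Real.sqrt d) * n ξ
      ∧ deriv v x
        = (1 / Real.sqrt d) * v x
          - (1 / d) * Real.exp (-x / Real.sqrt d)
            * ∫ ξ in Set.Iio x, Real.exp (ξ / Real.sqrt d) * n ξ := by
  set s := Real.sqrt d with hsdef
  have hs : 0 < s := Real.sqrt_pos.2 hd
  have hss : s * s = d := Real.mul_self_sqrt hd.le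
  set g₁ : ℝ → ℝ := fun ξ => Real.exp (ξ / s) * n ξ with hg₁
  set g₂ : ℝ → ℝ := fun ξ => Real.exp (-ξ / s) * n ξ with hg₂
  have hg₁c : Continuous g₁ := ((Real.continuous_exp.comp (continuous_id.div_const s)).mul hc)
  have hg₂c : Continuous g₂ :=
    ((Real.continuous_exp.comp (continuous_id.neg.div_const s)).mul hc)
  have hg₁i : ∀ a : ℝ, IntegrableOn g₁ (Set.Iic a) := by
    intro a
    refine Integrable.mono ((hi.restrict (s := Set.Iic a)).const_mul (Real.exp (a / s)))
      (hg₁c.aestronglyMeasurable.restrict) ?_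
    filter_upwards [ae_restrict_mem measurableSet_Iic] with ξ hξ
    simp only [g₁, norm_mul, Real.norm_eq_abs, abs_of_pos (Real.exp_pos _)]
    gcongr
    exact hξ
  have hg₂i : ∀ a : ℝ, IntegrableOn g₂ (Set.Ici a) := by
    intro a
    refine Integrable.mono ((hi.restrict (s := Set.Ici a)).const_mul (Real.exp (-a / s)))
      (hg₂c.aestronglyMeasurable.restrict) ?_
    filter_upwards [ae_restrict_mem measurableSet_Ici] with ξ hξ
    simp only [g₂, norm_mul, Real.norm_eq_abs, abs_of_pos (Real.exp_pos _)]
    gcongr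
    exact hξ
  set A : ℝ → ℝ := fun x => ∫ ξ in Set.Iio x, g₁ ξ with hA
  set B : ℝ → ℝ := fun x => ∫ ξ in Set.Ioi x, g₂ ξ with hB
  -- the splitting identity
  have hsplit : v = fun x => (1 / (2 * s)) *
      (Real.exp (-x / s) * A x + Real.exp (x / s) * B x) := by
    funext x
    rw [hv]
    dsimp only
    have hint : Integrable (fun ξ => pd d (x - ξ) * n ξ) := by
      have hcont : Continuous (fun ξ => pd d (x - ξ) * n ξ) := by
        unfold pd; fun_prop
      refine Integrable.mono (hi.const_mul (1 / (2 * s)))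
        hcont.aestronglyMeasurable ?_
      filter_upwards with ξ
      have h1 : Real.exp (-|x - ξ| / s) ≤ 1 := by
        rw [← Real.exp_zero]
        exact Real.exp_le_exp.2
          (div_nonpos_of_nonpos_of_nonneg (neg_nonpos.2 (abs_nonneg _)) hs.le)
      simp only [pd, norm_mul, Real.norm_eq_abs, ← hsdef]
      rw [abs_of_pos (show (0:ℝ) < 1 / (2 * s) by positivity),
        abs_of_pos (Real.exp_pos _)]
      calc 1 / (2 * s) * Real.exp (-|x - ξ| / s) * |n ξ|
          ≤ 1 / (2 * s) * 1 * |n ξ| := by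
            apply mul_le_mul_of_nonneg_right _ (abs_nonneg _)
            exact mul_le_mul_of_nonneg_left h1 (by positivity)
        _ = 1 / (2 * s) * |n ξ| := by ring
    rw [← intervalIntegral.integral_Iio_add_Ici (b := x) hint.integrableOn hint.integrableOn]
    have e1 : ∫ ξ in Set.Iio x, pd d (x - ξ) * n ξ
        = (1 / (2 * s)) * (Real.exp (-x / s) * A x) := by
      rw [hA, ← MeasureTheory.integral_const_mul, ← MeasureTheory.integral_const_mul]
      refine setIntegral_congr_fun measurableSet_Iio fun ξ hξ => ?_
      have : |x - ξ| = x - ξ := abs_of_pos (by simpa using hξ)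
      simp only [pd, this, ← hsdef, g₁]
      rw [show -(x - ξ) / s = -x / s + ξ / s by ring, Real.exp_add]
      ring
    have e2 : ∫ ξ in Set.Ici x, pd d (x - ξ) * n ξ
        = (1 / (2 * s)) * (Real.exp (x / s) * B x) := by
      rw [hB]
      dsimp only
      rw [← integral_Ici_eq_integral_Ioi, ← MeasureTheory.integral_const_mul,
        ← MeasureTheory.integral_const_mul]
      refine setIntegral_congr_fun measurableSet_Ici fun ξ hξ => ?_
      have : |x - ξ| = ξ - x := by
        rw [abs_sub_comm]; exact abs_of_nonneg (by simpa using hξ)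
      simp only [pd, this, ← hsdef, g₂]
      rw [show -(ξ - x) / s = x / s + -ξ / s by ring, Real.exp_add]
      ring
    rw [e1, e2]; ring
  -- derivatives of the pieces
  have hAx : ∀ x : ℝ, HasDerivAt A (g₁ x) x := hasDerivAt_int_Iio g₁ hg₁c hg₁i
  have hBx : ∀ x : ℝ, HasDerivAt B (-(g₂ x)) x := hasDerivAt_int_Ioi g₂ hg₂c hg₂i
  have hexp1 : ∀ x : ℝ, HasDerivAt (fun x => Real.exp (-x / s))
      (Real.exp (-x / s) * (-1 / s)) x := by
    intro x
    have h0 : HasDerivAt (fun x : ℝ => -x / s) (-1 / s) x := by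
      simpa [neg_div] using ((hasDerivAt_id x).neg.div_const s)
    exact (Real.hasDerivAt_exp _).comp x h0
  have hexp2 : ∀ x : ℝ, HasDerivAt (fun x => Real.exp (x / s))
      (Real.exp (x / s) * (1 / s)) x := by
    intro x
    have h0 : HasDerivAt (fun x : ℝ => x / s) (1 / s) x := by
      simpa using ((hasDerivAt_id x).div_const s)
    exact (Real.hasDerivAt_exp _).comp x h0
  have hvx : ∀ x : ℝ, HasDerivAt v ((1 / (2 * s)) *
      ((Real.exp (-x / s) * (-1 / s) * A x + Real.exp (-x / s) * g₁ x)
        + (Real.exp (x / s) * (1 / s) * B x + Real.exp (x / s) * (-(g₂ x))))) x := by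
    intro x
    rw [hsplit]
    exact ((((hexp1 x).mul (hAx x)).add ((hexp2 x).mul (hBx x))).const_mul _)
  have hcancel : ∀ x : ℝ, Real.exp (-x / s) * g₁ x - Real.exp (x / s) * g₂ x = 0 := by
    intro x
    simp only [g₁, g₂]
    rw [← mul_assoc, ← mul_assoc, ← Real.exp_add, ← Real.exp_add,
      show -x / s + x / s = 0 by ring, show x / s + -x / s = 0 by ring]
    ring
  refine ⟨fun x => (hvx x).differentiableAt, fun x => ?_⟩
  have hvxval : v x = (1 / (2 * s)) *
      (Real.exp (-x / s) * A x + Real.exp (x / s) * B x) := by rw [hsplit]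
  constructor
  · rw [(hvx x).deriv, hvxval, ← hss]
    show _ = _ + _ * _ * B x
    linear_combination (1 / (2 * s)) * hcancel x
  · rw [(hvx x).deriv, hvxval, ← hss]
    show _ = _ - _ * _ * A x
    linear_combination (1 / (2 * s)) * hcancel x
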